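/- Let q ∈ ℚ_2 with ord_2(q) < -1. Then the set {(z - q)^2 : z ∈ ℤ_2} equals 2q·ℤ_2 + q^2. If instead ord_2(q) = -1, then {(z - q)^2 : z ∈ ℤ_2} = 4q·ℤ_2 + q^2. -/

import Mathlib

lemma two_dvd_or (x : ℤ_[2]) : (2:ℤ_[2]) ∣ x ∨ (2:ℤ_[2]) ∣ x - 1 := by
  have hs := PadicInt.appr_spec 1 x
  rw [Ideal.mem_span_singleton] at hs
  have hl : x.appr 1 < 2 := by simpa using PadicInt.appr_lt x 1
  have h01 : x.appr 1 = 0 ∨ x.appr 1 = 1 := by omega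
  rcases h01 with h | h <;> rw [h] at hs
  · left; simpa using hs
  · right; simpa using hs

lemma odd_sub (x y : ℤ_[2]) (hx : ¬ (2:ℤ_[2]) ∣ x) (hy : ¬ (2:ℤ_[2]) ∣ y) :
    (2:ℤ_[2]) ∣ x - y := by
  rcases two_dvd_or x with h | h
  · exact absurd h hx
  rcases two_dvd_or y with h' | h'
  · exact absurd h' hy
  have := dvd_sub h h'
  simpa using this

lemma norm_two_int : ‖(2:ℤ_[2])‖ = 2⁻¹ := by
  simpa using PadicInt.norm_p (p := 2)

lemma norm_two_q : ‖(2:ℚ_[2])‖ = 2⁻¹ := by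
  simpa using Padic.norm_p (p := 2)

lemma dvd_norm_le {w : ℤ_[2]} (h : (2:ℤ_[2]) ∣ w) : ‖w‖ ≤ 2⁻¹ := by
  obtain ⟨c, rfl⟩ := h
  calc ‖(2:ℤ_[2]) * c‖ ≤ ‖(2:ℤ_[2])‖ * ‖c‖ := norm_mul_le _ _
    _ ≤ 2⁻¹ * 1 := by rw [norm_two_int]; gcongr; exact PadicInt.norm_le_one _
    _ = 2⁻¹ := by norm_num

lemma key2 (u z : ℤ_[2]) (hu : ‖u‖ = 1) : ‖z * (z - u)‖ ≤ 2⁻¹ := by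
  have hu2 : ¬ (2:ℤ_[2]) ∣ u := by
    intro h
    have := dvd_norm_le h
    rw [hu] at this; norm_num at this
  have hdvd : (2:ℤ_[2]) ∣ z * (z - u) := by
    by_cases hz : (2:ℤ_[2]) ∣ z
    · exact hz.mul_right _
    · exact (odd_sub z u hz hu2).mul_left z
  exact dvd_norm_le hdvd

lemma exists_fixed (a b : ℤ_[2]) (ha : ‖a‖ ≤ 2⁻¹) :
    ∃ v : ℤ_[2], v = b + a * v ^ 2 := by
  set f : ℤ_[2] → ℤ_[2] := fun v => b + a * v ^ 2 with hf
  have hlip : LipschitzWith (1/2) f := by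
    apply LipschitzWith.of_dist_le_mul
    intro x y
    have h1 : f x - f y = a * (x + y) * (x - y) := by simp only [hf]; ring
    rw [dist_eq_norm, dist_eq_norm, h1]
    have h3 : ((1/2 : NNReal) : ℝ) = 2⁻¹ * 1 := by norm_num
    rw [h3]
    calc ‖a * (x + y) * (x - y)‖ ≤ ‖a * (x + y)‖ * ‖x - y‖ := norm_mul_le _ _
      _ ≤ (‖a‖ * ‖x + y‖) * ‖x - y‖ := by
          have := norm_mul_le a (x + y)
          gcongr
      _ ≤ (2⁻¹ * 1) * ‖x - y‖ := by
          have h2 := PadicInt.norm_le_one (x + y)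
          gcongr
  have hc : ContractingWith (1/2) f := ⟨one_half_lt_one, hlip⟩
  exact ⟨hc.fixedPoint f, (hc.fixedPoint_isFixedPt).symm⟩

/-- For `q ∈ ℚ_[2]`: if `ord₂(q) < -1` then
`{(z-q)² : z ∈ ℤ_[2]} = 2q·ℤ_[2] + q²`, and if `ord₂(q) = -1` then
`{(z-q)² : z ∈ ℤ_[2]} = 4q·ℤ_[2] + q²`. -/
theorem translated_squares_two_adic (q : ℚ_[2]) :
    (q.valuation < -1 →
      {y : ℚ_[2] | ∃ z : ℤ_[2], y = ((z : ℚ_[2]) - q) ^ 2} =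
        {y : ℚ_[2] | ∃ t : ℤ_[2], y = 2 * q * (t : ℚ_[2]) + q ^ 2}) ∧
    (q.valuation = -1 →
      {y : ℚ_[2] | ∃ z : ℤ_[2], y = ((z : ℚ_[2]) - q) ^ 2} =
        {y : ℚ_[2] | ∃ t : ℤ_[2], y = 4 * q * (t : ℚ_[2]) + q ^ 2}) := by
  constructor
  · intro hv
    have hq0 : q ≠ 0 := by
      intro h; rw [h, Padic.valuation_zero] at hv; omega
    have hnq : (4:ℝ) ≤ ‖q‖ := by
      rw [Padic.norm_eq_zpow_neg_valuation hq0]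
      have h2 : (2:ℤ) ≤ -q.valuation := by omega
      calc (4:ℝ) = (2:ℕ) ^ (2:ℤ) := by norm_num
        _ ≤ (2:ℕ) ^ (-q.valuation) := zpow_le_zpow_right₀ (by norm_num) h2
    have hc : ‖(2 * q)⁻¹‖ ≤ 2⁻¹ := by
      rw [norm_inv, norm_mul, norm_two_q]
      calc (2⁻¹ * ‖q‖)⁻¹ ≤ (2⁻¹ * 4)⁻¹ := by gcongr
        _ = 2⁻¹ := by norm_num
    set c : ℤ_[2] := ⟨(2 * q)⁻¹, le_trans hc (by norm_num)⟩ with hcdef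
    have hcval : (c : ℚ_[2]) = (2 * q)⁻¹ := rfl
    have h2q : (2 * q) ≠ 0 := mul_ne_zero two_ne_zero hq0
    ext y
    simp only [Set.mem_setOf_eq]
    constructor
    · rintro ⟨z, rfl⟩
      refine ⟨z ^ 2 * c - z, ?_⟩
      push_cast [hcval]
      field_simp
      ring
    · rintro ⟨t, rfl⟩
      obtain ⟨v, hvfix⟩ := exists_fixed c (-t) (by rwa [PadicInt.norm_def, hcval])
      refine ⟨v, ?_⟩
      have h := congrArg (fun x : ℤ_[2] => (x : ℚ_[2])) hvfix
      push_cast [hcval] at h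
      field_simp at h
      linear_combination h
  · intro hv
    have hq0 : q ≠ 0 := by intro h; rw [h, Padic.valuation_zero] at hv; omega
    have hnq : ‖q‖ = 2 := by rw [Padic.norm_eq_zpow_neg_valuation hq0, hv]; norm_num
    have h2q : ‖2 * q‖ = 1 := by rw [norm_mul, norm_two_q, hnq]; norm_num
    have h4q : ‖(4:ℚ_[2]) * q‖ = 2⁻¹ := by
      have h44 : (4:ℚ_[2]) = 2 * 2 := by norm_num
      rw [h44, mul_assoc, norm_mul, norm_two_q, h2q]; norm_num
    have h4q0 : (4:ℚ_[2]) * q ≠ 0 := by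
      intro h; rw [h, norm_zero] at h4q; norm_num at h4q
    set u : ℤ_[2] := ⟨2 * q, le_of_eq h2q⟩ with hudef
    have huval : (u : ℚ_[2]) = 2 * q := rfl
    have hun : ‖u‖ = 1 := h2q
    set w : ℤ_[2] := ⟨(2 * q)⁻¹, le_of_eq (by rw [norm_inv, h2q]; norm_num)⟩ with hwdef
    have hwval : (w : ℚ_[2]) = (2 * q)⁻¹ := rfl
    ext y
    simp only [Set.mem_setOf_eq]
    constructor
    · rintro ⟨z, rfl⟩
      have hkey : ‖(z:ℚ_[2]) * ((z:ℚ_[2]) - 2 * q)‖ ≤ 2⁻¹ := by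
        have h := key2 u z hun
        rw [PadicInt.norm_def] at h
        push_cast [huval] at h
        exact h
      refine ⟨⟨(z:ℚ_[2]) * ((z:ℚ_[2]) - 2 * q) / (4 * q), ?_⟩, ?_⟩
      · rw [norm_div, h4q]
        calc ‖(z:ℚ_[2]) * ((z:ℚ_[2]) - 2 * q)‖ / 2⁻¹ ≤ 2⁻¹ / 2⁻¹ := by gcongr
          _ = 1 := by norm_num
      · show ((z:ℚ_[2]) - q) ^ 2 =
          4 * q * ((z:ℚ_[2]) * ((z:ℚ_[2]) - 2 * q) / (4 * q)) + q ^ 2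
        field_simp
        ring
    · rintro ⟨t, rfl⟩
      have han : ‖-((2:ℤ_[2]) * w)‖ ≤ 2⁻¹ := by
        rw [norm_neg]
        calc ‖(2:ℤ_[2]) * w‖ ≤ ‖(2:ℤ_[2])‖ * ‖w‖ := norm_mul_le _ _
          _ ≤ 2⁻¹ * 1 := by rw [norm_two_int]; gcongr; exact PadicInt.norm_le_one _
          _ = 2⁻¹ := by norm_num
      obtain ⟨v, hvfix⟩ := exists_fixed (-(2 * w)) t han
      refine ⟨u + 2 * v, ?_⟩
      have h := congrArg (fun x : ℤ_[2] => (x : ℚ_[2])) hvfix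
      push_cast [hwval] at h
      have h2q0 : (2 : ℚ_[2]) * q ≠ 0 := mul_ne_zero two_ne_zero hq0
      have hc2 : ((2:ℤ_[2]):ℚ_[2]) = 2 := rfl
      rw [hc2] at h
      field_simp at h
      push_cast [huval, hc2]
      linear_combination (-4 : ℚ_[2]) * h
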